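/- Let G be a finite simple graph, 𝒫 a partition of V(G), and P_1 ≠ P_2 two parts of 𝒫; let 𝒫' be the partition obtained from 𝒫 by merging P_1 and P_2 into P* = P_1 ∪ P_2. Let H be a nonempty connected red-induced subtrigraph of G/𝒫' such that P* ∈ V(H) ∪ (R_{G/𝒫'}(V(H)) \ B_{G/𝒫'}(V(H))). For j = 1, 2, let 𝒬_j = B_{G/𝒫}(P_j) ∩ (V(H) \ {P*}). Then: (1) for each j ∈ {1,2}, 𝒬_j ∩ B_{G/𝒫}(P_{3−j}) = ∅; (2) 𝒬_1 and 𝒬_2 are disjoint; (3) every subset of V(H) \ {P*} that induces a connected subgraph of the red graph ℛ(G/𝒫') is a set of parts of 𝒫 that induces a connected subgraph of ℛ(G/𝒫) and contains no two parts joined by a black edge of G/𝒫. -/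

import Mathlib

open SimpleGraph

/-- `X` is complete to `Y` in `G`. -/
def IsCompleteTo {V : Type*} (G : SimpleGraph V) (X Y : Set V) : Prop :=
  ∀ x ∈ X, ∀ y ∈ Y, G.Adj x y

/-- `X` is anti-complete to `Y` in `G`. -/
def IsAnticompleteTo {V : Type*} (G : SimpleGraph V) (X Y : Set V) : Prop :=
  ∀ x ∈ X, ∀ y ∈ Y, ¬ G.Adj x y

/-- Distinct parts `X`, `Y` are joined by a black edge of the quotient trigraph. -/
def blackAdj {V : Type*} (G : SimpleGraph V) (X Y : Set V) : Prop :=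
  X ≠ Y ∧ IsCompleteTo G X Y

/-- Distinct parts `X`, `Y` are joined by a red edge of the quotient trigraph. -/
def redAdj {V : Type*} (G : SimpleGraph V) (X Y : Set V) : Prop :=
  X ≠ Y ∧ ¬ IsCompleteTo G X Y ∧ ¬ IsAnticompleteTo G X Y

/-- `B_{G/Prt}(X)`: the parts of `Prt` joined to `X` by a black edge. -/
def blackNbrs {V : Type*} (G : SimpleGraph V) (Prt : Set (Set V)) (X : Set V) :
    Set (Set V) :=
  {Y ∈ Prt | blackAdj G X Y}

/-- `B_{G/Prt}(𝒱)`: the parts of `Prt` outside `𝒱` joined by a black edge to a part of `𝒱`. -/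
def blackNbrsOfSet {V : Type*} (G : SimpleGraph V) (Prt : Set (Set V))
    (F : Set (Set V)) : Set (Set V) :=
  {Y ∈ Prt | Y ∉ F ∧ ∃ X ∈ F, blackAdj G X Y}

/-- `R_{G/Prt}(𝒱)`: the parts of `Prt` outside `𝒱` joined by a red edge to a part of `𝒱`. -/
def redNbrsOfSet {V : Type*} (G : SimpleGraph V) (Prt : Set (Set V))
    (F : Set (Set V)) : Set (Set V) :=
  {Y ∈ Prt | Y ∉ F ∧ ∃ X ∈ F, redAdj G X Y}

/-- The red graph induced on a set of parts. -/
def redGraphOn {V : Type*} (G : SimpleGraph V) (F : Set (Set V)) :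
    SimpleGraph ↥F where
  Adj X Y := redAdj G (X : Set V) (Y : Set V)
  symm := by
    constructor
    rintro X Y ⟨hne, hc, ha⟩
    refine ⟨hne.symm, fun hc' => hc fun x hx y hy => (hc' y hy x hx).symm,
      fun ha' => ha fun x hx y hy hadj => ha' y hy x hx hadj.symm⟩
  loopless := by
    constructor
    rintro X ⟨hne, -⟩
    exact hne rfl

/-- `F` is (the vertex set of) a connected red-induced subtrigraph of `G/Prt`. -/
def ConnectedRedInduced {V : Type*} (G : SimpleGraph V) (Prt : Set (Set V))
    (F : Set (Set V)) : Prop :=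
  F ⊆ Prt ∧ (∀ X ∈ F, ∀ Y ∈ F, ¬ blackAdj G X Y) ∧ (redGraphOn G F).Connected

theorem stmt14 {V : Type*} [Fintype V] (G : SimpleGraph V)
    (Prt : Set (Set V)) (hpart : Setoid.IsPartition Prt)
    (P₁ P₂ : Set V) (hP₁ : P₁ ∈ Prt) (hP₂ : P₂ ∈ Prt) (hP₁₂ : P₁ ≠ P₂)
    (Prt' : Set (Set V)) (hPrt' : Prt' = insert (P₁ ∪ P₂) (Prt \ {P₁, P₂}))
    (𝒱 : Set (Set V)) (h𝒱 : 𝒱.Nonempty)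
    (hH : ConnectedRedInduced G Prt' 𝒱)
    (hPstar : P₁ ∪ P₂ ∈ 𝒱 ∨
      (P₁ ∪ P₂ ∈ redNbrsOfSet G Prt' 𝒱 ∧ P₁ ∪ P₂ ∉ blackNbrsOfSet G Prt' 𝒱)) :
    ((blackNbrs G Prt P₁ ∩ (𝒱 \ {P₁ ∪ P₂})) ∩ blackNbrs G Prt P₂ = ∅) ∧
    ((blackNbrs G Prt P₂ ∩ (𝒱 \ {P₁ ∪ P₂})) ∩ blackNbrs G Prt P₁ = ∅) ∧
    ((blackNbrs G Prt P₁ ∩ (𝒱 \ {P₁ ∪ P₂})) ∩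
      (blackNbrs G Prt P₂ ∩ (𝒱 \ {P₁ ∪ P₂})) = ∅) ∧
    (∀ 𝒮 : Set (Set V), 𝒮 ⊆ 𝒱 \ {P₁ ∪ P₂} → (redGraphOn G 𝒮).Connected →
      𝒮 ⊆ Prt ∧ (redGraphOn G 𝒮).Connected ∧
        ∀ X ∈ 𝒮, ∀ Y ∈ 𝒮, ¬ blackAdj G X Y) := by

  have key : ∀ X, X ∈ blackNbrs G Prt P₁ → X ∈ 𝒱 \ {P₁ ∪ P₂} →
      X ∈ blackNbrs G Prt P₂ → False := by
    rintro X ⟨hXP, hne1, hc1⟩ ⟨hX𝒱, hXne⟩ ⟨-, hne2, hc2⟩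
    have hXne' : X ≠ P₁ ∪ P₂ := hXne
    have hblack : blackAdj G X (P₁ ∪ P₂) := by
      refine ⟨hXne', fun x hx y hy => ?_⟩
      rcases hy with hy | hy
      · exact (hc1 y hy x hx).symm
      · exact (hc2 y hy x hx).symm
    rcases hPstar with hmem | ⟨⟨-, hnot𝒱, -⟩, hnb⟩
    · exact hH.2.1 X hX𝒱 _ hmem hblack
    · exact hnb ⟨by rw [hPrt']; exact Set.mem_insert _ _, hnot𝒱, X, hX𝒱, hblack⟩
  refine ⟨?_, ?_, ?_, ?_⟩
  · ext X
    simp only [Set.mem_inter_iff, Set.mem_empty_iff_false, iff_false, not_and]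
    exact fun ⟨h1, h2⟩ h3 => (key X h1 h2 h3).elim
  · ext X
    simp only [Set.mem_inter_iff, Set.mem_empty_iff_false, iff_false, not_and]
    exact fun ⟨h1, h2⟩ h3 => (key X h3 h2 h1).elim
  · rw [Set.eq_empty_iff_forall_notMem]
    rintro X ⟨⟨h1, h2⟩, h3, -⟩
    exact key X h1 h2 h3
  · intro 𝒮 h𝒮 hconn
    refine ⟨?_, hconn, fun X hX Y hY => hH.2.1 X (h𝒮 hX).1 Y (h𝒮 hY).1⟩
    intro X hX
    obtain ⟨hX𝒱, hXne⟩ := h𝒮 hX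
    have : X ∈ Prt' := hH.1 hX𝒱
    rw [hPrt'] at this
    rcases this with h | h
    · exact absurd h hXne
    · exact h.1
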